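/- If F_a + F_a† + G_aG_a† = 0, then every eigenvalue of F_a has nonpositive real part; moreover if (F_a, G_a) is controllable then every eigenvalue of F_a has strictly negative real part. -/

import Mathlib

open Matrix

/-- Controllability matrix `[G, FG, ..., F^{n-1}G]` has full rank `n`. -/
def Controllable {n m : ℕ} (F : Matrix (Fin n) (Fin n) ℂ)
    (G : Matrix (Fin n) (Fin m) ℂ) : Prop :=
  (Matrix.of (fun (i : Fin n) (p : Fin n × Fin m) => (F ^ (p.1 : ℕ) * G) i p.2)).rank = n

private lemma star_dot' {κ : Type*} [Fintype κ] (v : κ → ℂ) :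
    star v ⬝ᵥ v = ((∑ i, Complex.normSq (v i) : ℝ) : ℂ) := by
  simp [dotProduct, Complex.normSq_eq_conj_mul_self]

private lemma left_eig {n : ℕ} (Fa : Matrix (Fin n) (Fin n) ℂ) {μ : ℂ}
    (hμ : μ ∈ spectrum ℂ Fa) :
    ∃ w : Fin n → ℂ, w ≠ 0 ∧ Faᴴ *ᵥ w = (starRingEnd ℂ μ) • w := by
  rw [spectrum.mem_iff, Matrix.isUnit_iff_isUnit_det, isUnit_iff_ne_zero, not_not] at hμ
  have hdet : ((algebraMap ℂ (Matrix (Fin n) (Fin n) ℂ) μ - Fa)ᴴ).det = 0 := by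
    rw [Matrix.det_conjTranspose, hμ, star_zero]
  obtain ⟨w, hw0, hw⟩ := (Matrix.exists_mulVec_eq_zero_iff).2 hdet
  refine ⟨w, hw0, ?_⟩
  have : (algebraMap ℂ (Matrix (Fin n) (Fin n) ℂ) μ - Fa)ᴴ
      = (starRingEnd ℂ μ) • 1 - Faᴴ := by
    rw [conjTranspose_sub, Algebra.algebraMap_eq_smul_one, conjTranspose_smul,
      conjTranspose_one]
    rfl
  rw [this, sub_mulVec, smul_mulVec, one_mulVec, sub_eq_zero] at hw
  exact hw.symm

/-- If `F_a + F_aᴴ + G_a G_aᴴ = 0` then every eigenvalue of `F_a` has nonpositive real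
part; if moreover `(F_a, G_a)` is controllable, every eigenvalue has negative real part. -/
theorem eigenvalues_of_physically_realizable {n m : ℕ}
    (Fa : Matrix (Fin n) (Fin n) ℂ) (Ga : Matrix (Fin n) (Fin m) ℂ)
    (hpr : Fa + Faᴴ + Ga * Gaᴴ = 0) :
    (∀ μ ∈ spectrum ℂ Fa, μ.re ≤ 0) ∧
    (Controllable Fa Ga → ∀ μ ∈ spectrum ℂ Fa, μ.re < 0) := by
  have main : ∀ μ ∈ spectrum ℂ Fa, μ.re ≤ 0 ∧ (Controllable Fa Ga → μ.re < 0) := by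
    intro μ hμ
    obtain ⟨w, hw0, hw⟩ := left_eig Fa hμ
    set u : Fin m → ℂ := Gaᴴ *ᵥ w with hu
    -- star w ᵥ* Fa = μ • star w
    have hL : star w ᵥ* Fa = μ • star w := by
      have := congrArg star hw
      rw [star_mulVec, conjTranspose_conjTranspose, star_smul] at this
      simpa using this
    have hLG : star w ᵥ* Ga = star u := by
      rw [hu, star_mulVec, conjTranspose_conjTranspose]
    set c : ℂ := star w ⬝ᵥ w with hc
    -- main identity
    have hE : μ * c + (starRingEnd ℂ μ) * c + star u ⬝ᵥ u = 0 := by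
      have h0 : star w ⬝ᵥ ((Fa + Faᴴ + Ga * Gaᴴ) *ᵥ w) = 0 := by
        rw [hpr]; simp
      rw [add_mulVec, add_mulVec, dotProduct_add, dotProduct_add] at h0
      have h1 : star w ⬝ᵥ Fa *ᵥ w = μ * c := by
        rw [dotProduct_mulVec, hL, smul_dotProduct, smul_eq_mul, hc]
      have h2 : star w ⬝ᵥ Faᴴ *ᵥ w = (starRingEnd ℂ μ) * c := by
        rw [hw, dotProduct_smul, smul_eq_mul, hc]
      have h3 : star w ⬝ᵥ (Ga * Gaᴴ) *ᵥ w = star u ⬝ᵥ u := by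
        rw [← mulVec_mulVec, dotProduct_mulVec, hLG, hu]
      rw [h1, h2, h3] at h0
      exact h0
    set cR : ℝ := ∑ i, Complex.normSq (w i) with hcR
    set rR : ℝ := ∑ i, Complex.normSq (u i) with hrR
    have hcc : c = (cR : ℂ) := star_dot' w
    have huu : star u ⬝ᵥ u = (rR : ℂ) := star_dot' u
    have hcpos : 0 < cR := by
      have hne : ∃ i, w i ≠ 0 := by
        by_contra h
        push_neg at h
        exact hw0 (funext h)
      obtain ⟨i, hi⟩ := hne
      exact Finset.sum_pos' (fun j _ => Complex.normSq_nonneg _)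
        ⟨i, Finset.mem_univ i, Complex.normSq_pos.2 hi⟩
    have hrnn : 0 ≤ rR := Finset.sum_nonneg fun j _ => Complex.normSq_nonneg _
    have hre : 2 * μ.re * cR + rR = 0 := by
      have := congrArg Complex.re hE
      rw [hcc, huu] at this
      simp [Complex.add_re, Complex.mul_re] at this
      linarith [this]
    have hle : μ.re ≤ 0 := by nlinarith
    refine ⟨hle, ?_⟩
    intro hctrl
    rcases lt_or_eq_of_le hle with h | h
    · exact h
    · -- μ.re = 0, derive contradiction from controllability
      exfalso
      have hr0 : rR = 0 := by nlinarith
      have hu0 : u = 0 := by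
        funext i
        have : Complex.normSq (u i) = 0 := by
          have := (Finset.sum_eq_zero_iff_of_nonneg
            (fun j _ => Complex.normSq_nonneg (u j))).1 hr0 i (Finset.mem_univ i)
          exact this
        exact Complex.normSq_eq_zero.1 this
      have hG0 : star w ᵥ* Ga = 0 := by rw [hLG, hu0, star_zero]
      have hpow : ∀ k : ℕ, star w ᵥ* (Fa ^ k) = (μ ^ k) • star w := by
        intro k
        induction k with
        | zero => simp
        | succ k ih =>
          rw [pow_succ, ← vecMul_vecMul, ih, smul_vecMul, hL, smul_smul, pow_succ]
      have hFkG : ∀ k : ℕ, star w ᵥ* (Fa ^ k * Ga) = 0 := by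
        intro k
        rw [← vecMul_vecMul, hpow, smul_vecMul, hG0, smul_zero]
      set C : Matrix (Fin n) (Fin n × Fin m) ℂ :=
        Matrix.of (fun (i : Fin n) (p : Fin n × Fin m) => (Fa ^ (p.1 : ℕ) * Ga) i p.2) with hCdef
      have hCrank : C.rank = n := hctrl
      have hsurj : Function.Surjective C.mulVecLin := by
        rw [← LinearMap.range_eq_top]
        apply Submodule.eq_top_of_finrank_eq
        rw [← Matrix.rank, hCrank, Module.finrank_pi]
        simp
      obtain ⟨x, hx⟩ := hsurj w
      rw [Matrix.mulVecLin_apply] at hx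
      have hwc : star w ᵥ* C = 0 := by
        funext p
        have : (star w ᵥ* C) p = (star w ᵥ* (Fa ^ (p.1 : ℕ) * Ga)) p.2 := by
          simp [vecMul, dotProduct, hCdef]
        rw [this, hFkG]
        rfl
      have : c = 0 := by
        have h0 : star w ⬝ᵥ (C *ᵥ x) = 0 := by
          rw [dotProduct_mulVec, hwc, zero_dotProduct]
        rw [hx] at h0
        rw [hc]
        exact h0
      rw [hcc] at this
      have : cR = 0 := by exact_mod_cast this
      linarith
  exact ⟨fun μ hμ => (main μ hμ).1, fun hctrl μ hμ => (main μ hμ).2 hctrl⟩
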